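/- Fix a prime p and an integer g ≥ 1. Let V = (Fin g ⊕ Fin g) → ℚ_[p], and let B be the standard symplectic form on V, defined by B x y = Σ_{i : Fin g} ( x (Sum.inl i) · y (Sum.inr i) − x (Sum.inr i) · y (Sum.inl i) ). Call a ℤ_[p]-submodule L of V a primitive lattice if there exist families e, f : Fin g → V satisfying B (e i) (e j) = 0, B (f i) (f j) = 0 and B (e i) (f j) = (if i = j then 1 else 0) for all i, j, such that L is the ℤ_[p]-span of (Set.range e) ∪ (Set.range f). Then no primitive lattice strictly contains another: if L₁ and L₂ are primitive lattices with L₁ ≤ L₂, then L₁ = L₂. -/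
import Mathlib


open scoped BigOperators

/-- The standard symplectic form on `ℚ_[p]^{2g}`. -/
noncomputable def standardSymplecticForm (p : ℕ) [Fact p.Prime] (g : ℕ)
    (x y : (Fin g ⊕ Fin g) → ℚ_[p]) : ℚ_[p] :=
  ∑ i : Fin g, (x (Sum.inl i) * y (Sum.inr i) - x (Sum.inr i) * y (Sum.inl i))

/-- A `ℤ_[p]`-lattice in `ℚ_[p]^{2g}` is primitive if it is spanned by a symplectic basis. -/
def IsPrimitiveLattice (p : ℕ) [Fact p.Prime] (g : ℕ)
    (L : Submodule ℤ_[p] ((Fin g ⊕ Fin g) → ℚ_[p])) : Prop :=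
  ∃ e f : Fin g → ((Fin g ⊕ Fin g) → ℚ_[p]),
    (∀ i j, standardSymplecticForm p g (e i) (e j) = 0) ∧
    (∀ i j, standardSymplecticForm p g (f i) (f j) = 0) ∧
    (∀ i j, standardSymplecticForm p g (e i) (f j) = if i = j then 1 else 0) ∧
    L = Submodule.span ℤ_[p] (Set.range e ∪ Set.range f)

section Aux

variable (p : ℕ) [Fact p.Prime] (g : ℕ)

/-- The standard symplectic form as a bilinear map. -/
noncomputable def Bform :
    ((Fin g ⊕ Fin g) → ℚ_[p]) →ₗ[ℚ_[p]] ((Fin g ⊕ Fin g) → ℚ_[p]) →ₗ[ℚ_[p]] ℚ_[p] :=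
  LinearMap.mk₂ ℚ_[p] (standardSymplecticForm p g)
    (fun x x' y => by
      simp only [standardSymplecticForm, Pi.add_apply, ← Finset.sum_add_distrib]
      exact Finset.sum_congr rfl fun i _ => by ring)
    (fun c x y => by
      simp only [standardSymplecticForm, Pi.smul_apply, smul_eq_mul, Finset.mul_sum]
      exact Finset.sum_congr rfl fun i _ => by ring)
    (fun x y y' => by
      simp only [standardSymplecticForm, Pi.add_apply, ← Finset.sum_add_distrib]
      exact Finset.sum_congr rfl fun i _ => by ring)
    (fun c x y => by
      simp only [standardSymplecticForm, Pi.smul_apply, smul_eq_mul, Finset.mul_sum]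
      exact Finset.sum_congr rfl fun i _ => by ring)

lemma Bform_apply (x y : (Fin g ⊕ Fin g) → ℚ_[p]) :
    Bform p g x y = standardSymplecticForm p g x y := rfl

lemma Bform_skew (x y : (Fin g ⊕ Fin g) → ℚ_[p]) :
    Bform p g x y = - Bform p g y x := by
  simp only [Bform_apply, standardSymplecticForm, ← Finset.sum_neg_distrib]
  exact Finset.sum_congr rfl fun i _ => by ring

lemma norm_Bform_span_le {S T : Set ((Fin g ⊕ Fin g) → ℚ_[p])}
    (hST : ∀ s ∈ S, ∀ t ∈ T, ‖Bform p g s t‖ ≤ 1)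
    {x y : (Fin g ⊕ Fin g) → ℚ_[p]}
    (hx : x ∈ Submodule.span ℤ_[p] S) (hy : y ∈ Submodule.span ℤ_[p] T) :
    ‖Bform p g x y‖ ≤ 1 := by
  have key : ∀ s ∈ S, ‖Bform p g s y‖ ≤ 1 := by
    intro s hs
    induction hy using Submodule.span_induction with
    | mem t ht => exact hST s hs t ht
    | zero => simp
    | add a b _ _ ha hb =>
      rw [map_add]
      exact le_trans (Padic.nonarchimedean _ _) (max_le ha hb)
    | smul c a _ ha =>
      rw [← algebraMap_smul ℚ_[p] c a, map_smul, smul_eq_mul, norm_mul,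
        PadicInt.algebraMap_apply]
      exact mul_le_one₀ c.2 (norm_nonneg _) ha
  induction hx using Submodule.span_induction with
  | mem s hs => exact key s hs
  | zero => simp
  | add a b _ _ ha hb =>
    rw [map_add, LinearMap.add_apply]
    exact le_trans (Padic.nonarchimedean _ _) (max_le ha hb)
  | smul c a _ ha =>
    rw [← algebraMap_smul ℚ_[p] c a, map_smul, LinearMap.smul_apply, smul_eq_mul, norm_mul,
      PadicInt.algebraMap_apply]
    exact mul_le_one₀ c.2 (norm_nonneg _) ha

lemma mem_span_of_integral (hg : 1 ≤ g)
    (e f : Fin g → ((Fin g ⊕ Fin g) → ℚ_[p]))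
    (hee : ∀ i j, standardSymplecticForm p g (e i) (e j) = 0)
    (hff : ∀ i j, standardSymplecticForm p g (f i) (f j) = 0)
    (hef : ∀ i j, standardSymplecticForm p g (e i) (f j) = if i = j then 1 else 0)
    (x : (Fin g ⊕ Fin g) → ℚ_[p])
    (hxe : ∀ j, ‖Bform p g x (e j)‖ ≤ 1)
    (hxf : ∀ j, ‖Bform p g x (f j)‖ ≤ 1) :
    x ∈ Submodule.span ℤ_[p] (Set.range e ∪ Set.range f) := by
  have : NeZero g := ⟨by omega⟩
  set v : (Fin g ⊕ Fin g) → ((Fin g ⊕ Fin g) → ℚ_[p]) := Sum.elim e f with hv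
  have keysum : ∀ (c : (Fin g ⊕ Fin g) → ℚ_[p]) (w : (Fin g ⊕ Fin g) → ℚ_[p]),
      Bform p g (∑ i, c i • v i) w = ∑ i, c i * Bform p g (v i) w := by
    intro c w
    rw [map_sum, LinearMap.sum_apply]
    exact Finset.sum_congr rfl fun i _ => by
      rw [map_smul, LinearMap.smul_apply, smul_eq_mul]
  have pair_f : ∀ (c : (Fin g ⊕ Fin g) → ℚ_[p]) (j : Fin g),
      Bform p g (∑ i, c i • v i) (f j) = c (Sum.inl j) := by
    intro c j
    rw [keysum, Fintype.sum_sum_type]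
    simp only [hv, Sum.elim_inl, Sum.elim_inr, Bform_apply, hef, hff, mul_zero,
      Finset.sum_const_zero, add_zero, mul_ite, mul_one]
    simp [Finset.sum_ite_eq' Finset.univ j (fun i => c (Sum.inl i))]
  have pair_e : ∀ (c : (Fin g ⊕ Fin g) → ℚ_[p]) (j : Fin g),
      Bform p g (∑ i, c i • v i) (e j) = - c (Sum.inr j) := by
    intro c j
    rw [keysum, Fintype.sum_sum_type]
    have h1 : ∀ i : Fin g, Bform p g (f i) (e j) = -(if j = i then 1 else 0) := by
      intro i; rw [Bform_skew, Bform_apply, hef]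
    simp only [hv, Sum.elim_inl, Sum.elim_inr, Bform_apply, hee, mul_zero,
      Finset.sum_const_zero, zero_add]
    simp only [← Bform_apply, h1, mul_neg, mul_ite, mul_one, mul_zero]
    rw [Finset.sum_neg_distrib, neg_inj]
    simp [Finset.sum_ite_eq Finset.univ j (fun i => c (Sum.inr i))]
  have hli : LinearIndependent ℚ_[p] v := by
    rw [Fintype.linearIndependent_iff]
    intro c hc i
    match i with
    | Sum.inl j =>
      have := pair_f c j
      rw [hc] at this
      simpa using this.symm
    | Sum.inr j =>
      have h := pair_e c j
      rw [hc] at h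
      have h2 : -c (Sum.inr j) = 0 := by simpa using h.symm
      exact neg_eq_zero.mp h2
  have hcard : Fintype.card (Fin g ⊕ Fin g) =
      Module.finrank ℚ_[p] ((Fin g ⊕ Fin g) → ℚ_[p]) :=
    (Module.finrank_fintype_fun_eq_card ℚ_[p]).symm
  let b := basisOfLinearIndependentOfCardEqFinrank hli hcard
  have hb : ⇑b = v := coe_basisOfLinearIndependentOfCardEqFinrank hli hcard
  have hx' : x = ∑ i, b.repr x i • v i := by
    conv_lhs => rw [← b.sum_repr x]
    rw [hb]
  have hnorm : ∀ i, ‖b.repr x i‖ ≤ 1 := by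
    intro i
    match i with
    | Sum.inl j =>
      have := pair_f (fun i => b.repr x i) j
      rw [← hx'] at this
      rw [← this]
      exact hxf j
    | Sum.inr j =>
      have := pair_e (fun i => b.repr x i) j
      rw [← hx'] at this
      have h2 : b.repr x (Sum.inr j) = - Bform p g x (e j) := by rw [this, neg_neg]
      rw [h2, norm_neg]
      exact hxe j
  rw [← Set.Sum.elim_range, ← hv, hx']
  refine Submodule.sum_mem _ fun i _ => ?_
  set z : ℤ_[p] := ⟨b.repr x i, hnorm i⟩ with hz
  have hzv : b.repr x i • v i = z • v i := by
    rw [← algebraMap_smul (R := ℤ_[p]) ℚ_[p] z (v i), PadicInt.algebraMap_apply]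
  rw [hzv]
  exact Submodule.smul_mem _ _ (Submodule.subset_span (Set.mem_range_self i))

end Aux
/-- No primitive lattice strictly contains another primitive lattice. -/
theorem primitive_lattice_not_strictly_nested (p : ℕ) [Fact p.Prime] (g : ℕ) (hg : 1 ≤ g)
    (L₁ L₂ : Submodule ℤ_[p] ((Fin g ⊕ Fin g) → ℚ_[p]))
    (h₁ : IsPrimitiveLattice p g L₁) (h₂ : IsPrimitiveLattice p g L₂)
    (hle : L₁ ≤ L₂) : L₁ = L₂ := by
  obtain ⟨e₁, f₁, hee₁, hff₁, hef₁, hL₁⟩ := h₁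
  obtain ⟨e₂, f₂, hee₂, hff₂, hef₂, hL₂⟩ := h₂
  refine le_antisymm hle fun x hx => ?_
  -- the form takes integral values on generators of L₂
  have hgen : ∀ s ∈ Set.range e₂ ∪ Set.range f₂, ∀ t ∈ Set.range e₂ ∪ Set.range f₂,
      ‖Bform p g s t‖ ≤ 1 := by
    rintro s (⟨i, rfl⟩ | ⟨i, rfl⟩) t (⟨j, rfl⟩ | ⟨j, rfl⟩)
    · rw [Bform_apply, hee₂]; simp
    · rw [Bform_apply, hef₂]; split <;> simp
    · rw [Bform_skew, Bform_apply, hef₂, norm_neg]; split <;> simp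
    · rw [Bform_apply, hff₂]; simp
  have hxL₂ : x ∈ Submodule.span ℤ_[p] (Set.range e₂ ∪ Set.range f₂) := by rwa [← hL₂]
  have hmem : ∀ w ∈ L₁, ‖Bform p g x w‖ ≤ 1 := by
    intro w hw
    have hw₂ : w ∈ Submodule.span ℤ_[p] (Set.range e₂ ∪ Set.range f₂) := by
      rw [← hL₂]; exact hle hw
    exact norm_Bform_span_le p g hgen hxL₂ hw₂
  rw [hL₁]
  refine mem_span_of_integral p g hg e₁ f₁ hee₁ hff₁ hef₁ x (fun j => ?_) (fun j => ?_)
  · refine hmem _ ?_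
    rw [hL₁]
    exact Submodule.subset_span (Set.mem_union_left _ (Set.mem_range_self j))
  · refine hmem _ ?_
    rw [hL₁]
    exact Submodule.subset_span (Set.mem_union_right _ (Set.mem_range_self j))
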